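/- Let H be a finite simple graph and 𝓕 ⊆ F_3 with {13,23} ∈ 𝓕. If C = w_1 w_2 ... w_k w_1 is an induced cycle of length k ≥ 4 in H, then the strong component of the constraint digraph H⁺ containing the pair (w_1, w_2) contains a circuit. -/

import Mathlib

open SimpleGraph

variable {V : Type*}

/-- A `k`-pattern (a graph on vertex set `Fin k`) occurs in `H` under the ordering `lt`:
there are vertices `v 0 < v 1 < ⋯ < v (k-1)` whose induced ordered subgraph is the pattern. -/
def PatOccurs {k : ℕ} (H : SimpleGraph V) (lt : V → V → Prop)
    (F : SimpleGraph (Fin k)) : Prop :=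
  ∃ v : Fin k → V, (∀ i j : Fin k, i < j → lt (v i) (v j)) ∧
    ∀ i j : Fin k, H.Adj (v i) (v j) ↔ F.Adj i j

/-- The ordering `lt` is `𝓕`-free for `H`: no pattern of `𝓕` occurs under it. -/
def FreeOrder {k : ℕ} (H : SimpleGraph V) (𝓕 : Set (SimpleGraph (Fin k)))
    (lt : V → V → Prop) : Prop :=
  ∀ F ∈ 𝓕, ¬ PatOccurs H lt F

/-- `H` admits an `𝓕`-free linear ordering of its vertices. -/
def HasFreeOrdering {k : ℕ} (H : SimpleGraph V)
    (𝓕 : Set (SimpleGraph (Fin k))) : Prop :=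
  ∃ lt : V → V → Prop, IsStrictTotalOrder V lt ∧ FreeOrder H 𝓕 lt

/-- The triple `(x, y, z)`, in this order, induces the 3-pattern `F` in `H`. -/
def Induces3 (H : SimpleGraph V) (F : SimpleGraph (Fin 3)) (x y z : V) : Prop :=
  x ≠ y ∧ x ≠ z ∧ y ≠ z ∧
    (H.Adj x y ↔ F.Adj 0 1) ∧ (H.Adj x z ↔ F.Adj 0 2) ∧ (H.Adj y z ↔ F.Adj 1 2)

/-- The arc relation of the constraint digraph `H⁺` of `H` with respect to `𝓕 ⊆ F_3`:
there is an arc from `(x,y)` to `(z,y)` and an arc from `(y,z)` to `(y,x)` whenever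
`x, y, z`, ordered `x < y < z`, induce a forbidden pattern of `𝓕`. -/
def Arc (H : SimpleGraph V) (𝓕 : Set (SimpleGraph (Fin 3))) :
    V × V → V × V → Prop := fun p q =>
  ∃ x y z : V, (∃ F ∈ 𝓕, Induces3 H F x y z) ∧
    ((p = (x, y) ∧ q = (z, y)) ∨ (p = (y, z) ∧ q = (y, x)))

/-- `p` and `q` lie in the same strong component of the digraph with arc relation `r`. -/
def SameSCC {α : Type*} (r : α → α → Prop) (p q : α) : Prop :=
  Relation.ReflTransGen r p q ∧ Relation.ReflTransGen r q p

/-- `S` is a strong component of the constraint digraph `H⁺`. -/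
def IsSCCOf (H : SimpleGraph V) (𝓕 : Set (SimpleGraph (Fin 3)))
    (S : Set (V × V)) : Prop :=
  ∃ p : V × V, p.1 ≠ p.2 ∧ S = {q | SameSCC (Arc H 𝓕) p q}

/-- `S` contains a circuit `(x_0,x_1), (x_1,x_2), …, (x_{n-1},x_n), (x_n,x_0)` with `n ≥ 1`. -/
def HasCircuitIn {α : Type*} (S : Set (α × α)) : Prop :=
  ∃ n : ℕ, 1 ≤ n ∧ ∃ x : Fin (n + 1) → α, ∀ i : Fin (n + 1), (x i, x (i + 1)) ∈ S

/-- Some strong component of the constraint digraph `H⁺` contains a circuit. -/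
def HasSCCCircuit (H : SimpleGraph V) (𝓕 : Set (SimpleGraph (Fin 3))) : Prop :=
  ∃ S : Set (V × V), IsSCCOf H 𝓕 S ∧ HasCircuitIn S

/-- `H` has an invertible pair: distinct vertices `x, y` with `(x,y)` and `(y,x)` in the
same strong component of `H⁺`. -/
def InvertiblePair (H : SimpleGraph V) (𝓕 : Set (SimpleGraph (Fin 3))) : Prop :=
  ∃ x y : V, x ≠ y ∧ SameSCC (Arc H 𝓕) (x, y) (y, x)

/-- The 3-pattern `{13}`. -/
def P13 : SimpleGraph (Fin 3) := fromEdgeSet {s(0, 2)}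
/-- The 3-pattern `{12,23}`. -/
def P12_23 : SimpleGraph (Fin 3) := fromEdgeSet {s(0, 1), s(1, 2)}
/-- The 3-pattern `{12,13}`. -/
def P12_13 : SimpleGraph (Fin 3) := fromEdgeSet {s(0, 1), s(0, 2)}
/-- The 3-pattern `{13,23}`. -/
def P13_23 : SimpleGraph (Fin 3) := fromEdgeSet {s(0, 2), s(1, 2)}

/-- `𝓕` is nice. -/
def NicePatterns (𝓕 : Set (SimpleGraph (Fin 3))) : Prop :=
  𝓕 = {P13} ∨ 𝓕 = {P12_23} ∨ 𝓕 = {P13, P13_23} ∨ 𝓕 = {P13, P12_13, P13_23}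

/-- If `{13,23} ∈ 𝓕` and `w₁ w₂ … w_k w₁` is an induced cycle of length `k ≥ 4` in `H`,
then the strong component of `H⁺` containing `(w₁, w₂)` contains a circuit. -/
theorem stmt_9 [Fintype V] (H : SimpleGraph V) (𝓕 : Set (SimpleGraph (Fin 3)))
    (hF : P13_23 ∈ 𝓕) (m : ℕ) (w : Fin (m + 4) → V)
    (hinj : Function.Injective w)
    (hcyc : ∀ i j : Fin (m + 4), H.Adj (w i) (w j) ↔ (j = i + 1 ∨ i = j + 1)) :
    HasCircuitIn {q : V × V | SameSCC (Arc H 𝓕) (w 0, w 1) q} := by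
  have hP01 : ¬ P13_23.Adj 0 1 := by simp [P13_23]
  have hP02 : P13_23.Adj 0 2 := by simp [P13_23]
  have hP12 : P13_23.Adj 1 2 := by simp [P13_23]
  have hfe : ∀ a b : Fin (m+4), a = b → (a:ℕ) = (b:ℕ) := fun a b h => congrArg Fin.val h
  have cancel : ∀ (i a b : Fin (m+4)), i + a = i + b → a = b := fun i a b h => add_left_cancel h
  have key : ∀ i : Fin (m+4), Induces3 H P13_23 (w (i+2)) (w i) (w (i+1)) := by
    intro i
    have h20 : w (i+2) ≠ w i := by
      intro h
      have h2 : (2 : Fin (m+4)) = 0 := cancel i 2 0 (by rw [add_zero]; exact hinj h)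
      have : (2:ℕ) = 0 := hfe _ _ h2
      omega
    have h21 : w (i+2) ≠ w (i+1) := by
      intro h
      have h2 : (2 : Fin (m+4)) = 1 := cancel i 2 1 (hinj h)
      have : (2:ℕ) = 1 := hfe _ _ h2
      omega
    have h01 : w i ≠ w (i+1) := by
      intro h
      have h2 : (0 : Fin (m+4)) = 1 := cancel i 0 1 (by rw [add_zero]; exact hinj h)
      have : (0:ℕ) = 1 := hfe _ _ h2
      omega
    have hadd2 : i + 2 = i + 1 + 1 := by rw [add_assoc]; rfl
    refine ⟨h20, h21, h01, iff_of_false ?_ hP01, iff_of_true ?_ hP02, iff_of_true ?_ hP12⟩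
    · rw [hcyc]
      rintro (h | h)
      · rw [add_assoc] at h
        have h2 : (0 : Fin (m+4)) = 2 + 1 := cancel i 0 (2+1) (by rw [add_zero]; exact h)
        have : (0:ℕ) = 3 := hfe _ _ h2
        omega
      · have h2 : (2 : Fin (m+4)) = 1 := cancel i 2 1 h
        have : (2:ℕ) = 1 := hfe _ _ h2
        omega
    · rw [hcyc]; right; exact hadd2
    · rw [hcyc]; left; rfl
  have step : ∀ i : Fin (m+4),
      Relation.ReflTransGen (Arc H 𝓕) (w i, w (i+1)) (w (i+1), w (i+1+1)) := by
    intro i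
    obtain ⟨a, b, c, d, e, f⟩ := key i
    have h1 : Arc H 𝓕 (w i, w (i+1)) (w i, w (i+2)) :=
      ⟨w (i+2), w i, w (i+1), ⟨P13_23, hF, a, b, c, d, e, f⟩, Or.inr ⟨rfl, rfl⟩⟩
    have k2 : Induces3 H P13_23 (w i) (w (i+2)) (w (i+1)) :=
      ⟨fun h => a h.symm, c, b,
        iff_of_false (fun h => hP01 (d.mp h.symm)) hP01,
        iff_of_true (f.mpr hP12) hP02,
        iff_of_true (e.mpr hP02) hP12⟩
    have h2 : Arc H 𝓕 (w i, w (i+2)) (w (i+1), w (i+2)) :=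
      ⟨w i, w (i+2), w (i+1), ⟨P13_23, hF, k2⟩, Or.inl ⟨rfl, rfl⟩⟩
    have hadd2 : i + 2 = i + 1 + 1 := by rw [add_assoc]; rfl
    rw [hadd2] at h1 h2
    exact Relation.ReflTransGen.head h1 (Relation.ReflTransGen.single h2)
  open Fin.NatCast in
  have forward : ∀ (n : ℕ) (i : Fin (m+4)),
      Relation.ReflTransGen (Arc H 𝓕) (w i, w (i+1)) (w (i + n), w (i + n + 1)) := by
    intro n
    induction n with
    | zero => intro i; simpa using Relation.ReflTransGen.refl
    | succ n ih =>
        intro i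
        have := (ih i).trans (step (i + n))
        have hcast : (i + (↑(n+1) : Fin (m+4))) = i + ↑n + 1 := by push_cast; rw [add_assoc]
        rw [hcast]
        exact this
  open Fin.NatCast in
  have same : ∀ i : Fin (m+4), SameSCC (Arc H 𝓕) (w 0, w 1) (w i, w (i+1)) := by
    intro i
    constructor
    · have := forward i.val 0
      simpa [Fin.cast_val_eq_self] using this
    · have := forward (m + 4 - i.val) i
      have hz : (i + ((m + 4 - i.val : ℕ) : Fin (m+4))) = 0 := by
        have : ((i.val : ℕ) : Fin (m+4)) + ((m + 4 - i.val : ℕ) : Fin (m+4)) = ((m+4 : ℕ) : Fin (m+4)) := by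
          rw [← Nat.cast_add]
          congr 1
          omega
        rw [Fin.cast_val_eq_self] at this
        rw [this, Fin.natCast_self]
      rw [hz] at this
      simpa using this
  exact ⟨m + 3, by omega, w, fun i => same i⟩
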